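/- Suppose q ≥ 5 and k = 2, or q = 2 and k ≥ 4, or q ≥ 3 and k ≥ 3. Then there exist three q-ary simplex codes X₁, X₂, X₃ of dimension k in F_q^n (n = (q^k-1)/(q-1)) that are pairwise distinct, pairwise intersecting in (k-1)-dimensional subspaces, and all contained in a common (k+1)-dimensional subspace of F_q^n. -/

import Mathlib

open Module Submodule

/-- A `q`-ary simplex code of dimension `k`: a `k`-dimensional subspace of `F^n`
whose coordinate functional restrictions are nonzero and pairwise non-proportional. -/
def IsSimplexCode {F : Type*} [Field F] {n : ℕ} (k : ℕ)
    (C : Submodule F (Fin n → F)) : Prop :=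
  Module.finrank F ↥C = k ∧
  (∀ i : Fin n, ∃ c ∈ C, c i ≠ 0) ∧
  (∀ i j : Fin n, i ≠ j → ∀ a : F, ∃ c ∈ C, c j ≠ a * c i)
open Matrix

section Main

section Helpers

variable {F : Type*} [Field F]

theorem exists_smul_of_ker_le {W : Type*} [AddCommGroup W] [Module F W]
    (φ ψ : W →ₗ[F] F) (h : ∀ x, φ x = 0 → ψ x = 0) : ∃ c : F, ψ = c • φ := by
  by_cases hφ : ∃ z, φ z ≠ 0
  · obtain ⟨z, hz⟩ := hφ
    refine ⟨ψ z / φ z, ?_⟩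
    ext y
    have h1 : φ (y - (φ y / φ z) • z) = 0 := by
      simp only [map_sub, _root_.map_smul, smul_eq_mul]
      field_simp
      ring
    have h2 := h _ h1
    simp only [map_sub, _root_.map_smul, smul_eq_mul] at h2
    have h2' : ψ y = φ y / φ z * ψ z := by linear_combination h2
    simp only [LinearMap.smul_apply, smul_eq_mul]
    rw [h2']; field_simp
  · push_neg at hφ
    refine ⟨0, ?_⟩
    ext y
    simp [h y (hφ y)]

theorem exists_sep {W : Type*} [AddCommGroup W] [Module F W]
    (φ ψ : W →ₗ[F] F) (h : ∀ c : F, ψ ≠ c • φ) : ∃ x, φ x = 0 ∧ ψ x ≠ 0 := by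
  by_contra hc
  push_neg at hc
  obtain ⟨c, hc'⟩ := exists_smul_of_ker_le φ ψ hc
  exact h c hc'

/-- The standard pairing on `F^k × F`. -/
noncomputable def Bl (k : ℕ) : ((Fin k → F) × F) →ₗ[F] ((Fin k → F) × F) →ₗ[F] F :=
  LinearMap.mk₂ F (fun x y => x.1 ⬝ᵥ y.1 + x.2 * y.2)
    (by intro a b c; simp [add_dotProduct]; ring)
    (by intro a b c; simp [smul_dotProduct, smul_eq_mul]; ring)
    (by intro a b c; simp [dotProduct_add]; ring)
    (by intro a b c; simp [dotProduct_smul, smul_eq_mul]; ring)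

theorem Bl_apply {k : ℕ} (x y : (Fin k → F) × F) : Bl k x y = x.1 ⬝ᵥ y.1 + x.2 * y.2 := rfl

theorem Bl_right_nondeg {k : ℕ} (z : (Fin k → F) × F) (h : ∀ x, Bl k x z = 0) : z = 0 := by
  have h1 : z.1 = 0 := by
    funext j
    have := h (Pi.single j 1, 0)
    simpa [Bl_apply, single_dotProduct] using this
  have h2 : z.2 = 0 := by simpa [Bl_apply, zero_dotProduct] using h (0, 1)
  obtain ⟨z1, z2⟩ := z
  simp_all

theorem main_abstract {n k : ℕ}
    (w : Fin n → (Fin k → F) × F) (p : Fin 3 → (Fin k → F) × F)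
    (hnd : ∀ x, (∀ i, Bl k x (w i) = 0) → x = 0)
    (hp : ∀ m m' : Fin 3, m ≠ m' → ∀ c : F, p m' ≠ c • p m)
    (hg1 : ∀ (m : Fin 3) (i : Fin n) (c : F), w i ≠ c • p m)
    (hg2 : ∀ (m : Fin 3) (i j : Fin n), i ≠ j → ∀ a c : F, w j - a • w i ≠ c • p m) :
    ∃ X₁ X₂ X₃ : Submodule F (Fin n → F),
      IsSimplexCode k X₁ ∧ IsSimplexCode k X₂ ∧ IsSimplexCode k X₃ ∧
      X₁ ≠ X₂ ∧ X₁ ≠ X₃ ∧ X₂ ≠ X₃ ∧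
      Module.finrank F ↥(X₁ ⊓ X₂) = k - 1 ∧
      Module.finrank F ↥(X₁ ⊓ X₃) = k - 1 ∧
      Module.finrank F ↥(X₂ ⊓ X₃) = k - 1 ∧
      ∃ Y : Submodule F (Fin n → F), Module.finrank F ↥Y = k + 1 ∧
        X₁ ≤ Y ∧ X₂ ≤ Y ∧ X₃ ≤ Y := by
  classical
  set L : ((Fin k → F) × F) →ₗ[F] (Fin n → F) :=
    LinearMap.pi (fun i => (Bl k).flip (w i)) with hLdef
  have hLapp : ∀ x i, L x i = Bl k x (w i) := fun x i => rfl
  have hLinj : Function.Injective L := by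
    rw [← LinearMap.ker_eq_bot, eq_bot_iff]
    intro x hx
    simp only [LinearMap.mem_ker] at hx
    have : ∀ i, Bl k x (w i) = 0 := fun i => by rw [← hLapp, hx]; rfl
    simpa using hnd x this
  have hW : finrank F ((Fin k → F) × F) = k + 1 := by
    simp [Module.finrank_prod, Module.finrank_pi, Module.finrank_self]
  set φ : Fin 3 → ((Fin k → F) × F) →ₗ[F] F := fun m => (Bl k).flip (p m) with hφdef
  have hφapp : ∀ m x, φ m x = Bl k x (p m) := fun _ _ => rfl
  have hpne : ∀ m : Fin 3, p m ≠ 0 := by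
    intro m hm
    have h1 : m + 1 ≠ m := by fin_cases m <;> decide
    have := hp (m + 1) m h1 0
    rw [zero_smul] at this
    exact this hm
  have hφne : ∀ m, φ m ≠ 0 := by
    intro m h0
    apply hpne m
    apply Bl_right_nondeg
    intro x
    rw [LinearMap.ext_iff] at h0
    simpa [hφapp] using h0 x
  have hH : ∀ m, finrank F (LinearMap.ker (φ m)) = k := by
    intro m
    obtain ⟨z, hz⟩ : ∃ z, φ m z ≠ 0 := by
      by_contra h
      push_neg at h
      exact hφne m (LinearMap.ext h)
    have hr : LinearMap.range (φ m) = ⊤ := by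
      rw [eq_top_iff]
      intro c _
      refine ⟨(c / φ m z) • z, ?_⟩
      rw [_root_.map_smul, smul_eq_mul]
      field_simp
    have h1 := LinearMap.finrank_range_add_finrank_ker (φ m)
    rw [hr, finrank_top, hW] at h1
    simp only [Module.finrank_self] at h1
    omega
  set X : Fin 3 → Submodule F (Fin n → F) := fun m => Submodule.map L (LinearMap.ker (φ m))
    with hXdef
  have hXrank : ∀ m, finrank F (X m) = k := by
    intro m
    rw [← hH m]
    exact (Submodule.equivMapOfInjective L hLinj _).finrank_eq.symm
  -- separation producer
  have hsep : ∀ (m : Fin 3) (z : (Fin k → F) × F), (∀ c : F, z ≠ c • p m) →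
      ∃ x, φ m x = 0 ∧ Bl k x z ≠ 0 := by
    intro m z hz
    apply exists_sep (φ m) ((Bl k).flip z)
    intro c hcon
    apply hz c
    have : ∀ x, Bl k x (z - c • p m) = 0 := by
      intro x
      have := congrFun (congrArg (fun (ψ : ((Fin k → F) × F) →ₗ[F] F) => (ψ : _ → F)) hcon) x
      simp only [LinearMap.flip_apply, LinearMap.smul_apply, smul_eq_mul] at this
      rw [map_sub, _root_.map_smul, smul_eq_mul, this, hφapp]
      ring
    have h0 := Bl_right_nondeg _ this
    rwa [sub_eq_zero] at h0
  have hsc : ∀ m, IsSimplexCode k (X m) := by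
    intro m
    refine ⟨hXrank m, ?_, ?_⟩
    · intro i
      obtain ⟨x, hx0, hx1⟩ := hsep m (w i) (fun c => hg1 m i c)
      exact ⟨L x, Submodule.mem_map_of_mem (LinearMap.mem_ker.mpr hx0), hx1⟩
    · intro i j hij a
      obtain ⟨x, hx0, hx1⟩ := hsep m (w j - a • w i) (fun c => hg2 m i j hij a c)
      refine ⟨L x, Submodule.mem_map_of_mem (LinearMap.mem_ker.mpr hx0), ?_⟩
      intro hcon
      apply hx1
      rw [map_sub, _root_.map_smul, smul_eq_mul,
        show ((Bl k) x) (w j) = L x j from rfl, show ((Bl k) x) (w i) = L x i from rfl, hcon]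
      ring
  have hHne : ∀ m m', m ≠ m' → LinearMap.ker (φ m) ≠ LinearMap.ker (φ m') := by
    intro m m' hne heq
    obtain ⟨c, hc⟩ := exists_smul_of_ker_le (φ m) (φ m') (fun x hx => by
      have : x ∈ LinearMap.ker (φ m') := heq ▸ LinearMap.mem_ker.mpr hx
      exact LinearMap.mem_ker.mp this)
    apply hp m m' hne c
    have : ∀ x, Bl k x (p m' - c • p m) = 0 := by
      intro x
      have := congrFun (congrArg (fun (ψ : ((Fin k → F) × F) →ₗ[F] F) => (ψ : _ → F)) hc) x
      simp only [LinearMap.smul_apply, smul_eq_mul, hφapp] at this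
      rw [map_sub, _root_.map_smul, smul_eq_mul, this]
      ring
    have h0 := Bl_right_nondeg _ this
    rwa [sub_eq_zero] at h0
  have hXne : ∀ m m', m ≠ m' → X m ≠ X m' := by
    intro m m' hne hXeq
    exact hHne m m' hne (Submodule.map_injective_of_injective hLinj hXeq)
  have hXinf : ∀ m m', m ≠ m' → finrank F ↥(X m ⊓ X m') = k - 1 := by
    intro m m' hne
    have hmap : X m ⊓ X m' = Submodule.map L (LinearMap.ker (φ m) ⊓ LinearMap.ker (φ m')) :=
      (Submodule.map_inf L hLinj).symm
    have hrk : finrank F ↥(X m ⊓ X m') =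
        finrank F ↥(LinearMap.ker (φ m) ⊓ LinearMap.ker (φ m')) := by
      rw [hmap]
      exact (Submodule.equivMapOfInjective L hLinj _).finrank_eq.symm
    have hlt : LinearMap.ker (φ m) < LinearMap.ker (φ m) ⊔ LinearMap.ker (φ m') := by
      rcases lt_or_eq_of_le (le_sup_left :
        LinearMap.ker (φ m) ≤ LinearMap.ker (φ m) ⊔ LinearMap.ker (φ m')) with h | h
      · exact h
      · exfalso
        have hle : LinearMap.ker (φ m') ≤ LinearMap.ker (φ m) := h ▸ le_sup_right
        have := Submodule.eq_of_le_of_finrank_eq hle (by rw [hH, hH])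
        exact hHne m m' hne this.symm
    have h1 : k < finrank F ↥(LinearMap.ker (φ m) ⊔ LinearMap.ker (φ m')) := by
      have := Submodule.finrank_lt_finrank_of_lt hlt
      rwa [hH m] at this
    have h2 : finrank F ↥(LinearMap.ker (φ m) ⊔ LinearMap.ker (φ m')) ≤ k + 1 := by
      rw [← hW]
      exact Submodule.finrank_le _
    have h3 := Submodule.finrank_sup_add_finrank_inf_eq (LinearMap.ker (φ m))
      (LinearMap.ker (φ m'))
    rw [hH m, hH m'] at h3
    rw [hrk]
    omega
  refine ⟨X 0, X 1, X 2, hsc 0, hsc 1, hsc 2,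
    hXne 0 1 (by decide), hXne 0 2 (by decide), hXne 1 2 (by decide),
    hXinf 0 1 (by decide), hXinf 0 2 (by decide), hXinf 1 2 (by decide),
    LinearMap.range L, ?_, ?_, ?_, ?_⟩
  · rw [LinearMap.finrank_range_of_inj hLinj, hW]
  all_goals
    rintro c ⟨x, _, rfl⟩
    exact ⟨x, rfl⟩

end Helpers



theorem exists_enum (F : Type*) [Field F] [Fintype F] {q n k : ℕ} (hq : Fintype.card F = q)
    (hn : n * (q - 1) = q ^ k - 1) :
    ∃ v : Fin n → (Fin k → F),
      (∀ i, v i ≠ 0) ∧ (∀ i j : Fin n, i ≠ j → ∀ a : F, v j ≠ a • v i) ∧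
      (∀ x : Fin k → F, x ≠ 0 → ∃ (i : Fin n) (a : F), x = a • v i) := by
  classical
  let P := Projectivization F (Fin k → F)
  have : Finite P := Quotient.finite _
  have : Fintype P := Fintype.ofFinite P
  let g : P × Fˣ → {y : Fin k → F // y ≠ 0} := fun Qu => ⟨(Qu.2 : F) • Qu.1.rep,
    smul_ne_zero (Units.ne_zero _) Qu.1.rep_nonzero⟩
  have hmkg : ∀ (Q : P) (u : Fˣ), Projectivization.mk F ((u : F) • Q.rep)
      (smul_ne_zero (Units.ne_zero _) Q.rep_nonzero) = Q := by
    intro Q u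
    conv_rhs => rw [← Projectivization.mk_rep Q]
    rw [Projectivization.mk_eq_mk_iff]
    exact ⟨u, by rw [Units.smul_def]⟩
  have hginj : Function.Injective g := by
    rintro ⟨Q, u⟩ ⟨Q', u'⟩ hgeq
    have heq : (u : F) • Q.rep = (u' : F) • Q'.rep := congrArg Subtype.val hgeq
    have hQ : Q = Q' := by
      rw [← hmkg Q u, ← hmkg Q' u']
      congr 1
    subst hQ
    have hu : (u : F) = (u' : F) := smul_left_injective F Q.rep_nonzero heq
    rw [Units.ext hu]
  have hgsurj : Function.Surjective g := by
    rintro ⟨x, hx⟩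
    have h := Projectivization.mk_rep (Projectivization.mk F x hx)
    rw [Projectivization.mk_eq_mk_iff] at h
    obtain ⟨a, ha⟩ := h
    refine ⟨(Projectivization.mk F x hx, a⁻¹), ?_⟩
    apply Subtype.ext
    show ((a⁻¹ : Fˣ) : F) • (Projectivization.mk F x hx).rep = x
    rw [← ha, Units.smul_def, smul_smul]
    norm_num
  let e : P × Fˣ ≃ {y : Fin k → F // y ≠ 0} := Equiv.ofBijective g ⟨hginj, hgsurj⟩
  have hcard : Fintype.card P * (q - 1) = q ^ k - 1 := by
    have h1 := Fintype.card_congr e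
    rw [Fintype.card_prod, Fintype.card_units, hq] at h1
    have h2 : Fintype.card {y : Fin k → F // y ≠ 0} = q ^ k - 1 := by
      have h3 : Fintype.card {y : Fin k → F // y = 0} = 1 := Fintype.card_subtype_eq 0
      have h4 := Fintype.card_subtype_compl (fun y : Fin k → F => y = 0)
      have h5 : Fintype.card (Fin k → F) = q ^ k := by
        rw [Fintype.card_fun, Fintype.card_fin, hq]
      simp only [h3, h5] at h4
      convert h4 using 2
    rw [h2] at h1
    exact h1
  have hq2 : 2 ≤ q := by
    rw [← hq]
    exact Fintype.one_lt_card
  have hcardP : Fintype.card P = n := by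
    have := hcard.trans hn.symm
    exact Nat.eq_of_mul_eq_mul_right (by omega) this
  let E : Fin n ≃ P := (Fintype.equivFinOfCardEq hcardP).symm
  refine ⟨fun i => (E i).rep, fun i => (E i).rep_nonzero, ?_, ?_⟩
  · intro i j hij a hcon
    have ha : a ≠ 0 := by
      intro h0
      rw [h0, zero_smul] at hcon
      exact (E j).rep_nonzero hcon
    have : E j = E i := by
      rw [← Projectivization.mk_rep (E j), ← Projectivization.mk_rep (E i),
        Projectivization.mk_eq_mk_iff]
      exact ⟨Units.mk0 a ha, by rw [Units.smul_def, Units.val_mk0]; exact hcon.symm⟩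
    exact hij (E.injective this).symm
  · intro x hx
    refine ⟨E.symm (Projectivization.mk F x hx), ?_⟩
    have h1 : Projectivization.mk F x hx =
        Projectivization.mk F (E (E.symm (Projectivization.mk F x hx))).rep
          (E (E.symm (Projectivization.mk F x hx))).rep_nonzero := by
      rw [Projectivization.mk_rep, Equiv.apply_symm_apply]
    rw [Projectivization.mk_eq_mk_iff] at h1
    obtain ⟨u, hu⟩ := h1
    refine ⟨(u : F), ?_⟩
    rw [Units.smul_def] at hu
    exact hu.symm



theorem star_generic {F : Type*} [Field F] {k : ℕ} (r : Fin 3 → (Fin k → F))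
    (f : (Fin k → F) → F) (b : Fin k → F)
    (hr0 : ∀ m, r m ≠ 0)
    (rayP : ∀ m m' : Fin 3, m ≠ m' → ∀ d d' : F, d ≠ 0 → d • r m ≠ d' • r m')
    (fo : ∀ x : Fin k → F, (∀ (m : Fin 3) (c : F), c ≠ 0 → x ≠ c • r m) → f x = 0)
    (σ : Fin 3 → Fin 3) (hσ : Function.Injective σ)
    (G : ∀ (m : Fin 3) (c : F), c ≠ 0 → ∃ c' : F, c' ≠ 0 ∧
      c • r m - f (c • r m) • b = c' • r (σ m)) :
    (∀ x : Fin k → F, x ≠ 0 → x - f x • b ≠ 0) ∧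
    (∀ x y : Fin k → F, x ≠ 0 → y ≠ 0 → ∀ a : F, a ≠ 0 →
      x - f x • b = a • (y - f y • b) → ∃ c : F, x = c • y) := by
  classical
  have dich : ∀ x : Fin k → F, (∃ (m : Fin 3) (c : F), c ≠ 0 ∧ x = c • r m) ∨
      ((∀ (m : Fin 3) (c : F), c ≠ 0 → x ≠ c • r m) ∧ f x = 0) := by
    intro x
    by_cases h : ∃ (m : Fin 3) (c : F), c ≠ 0 ∧ x = c • r m
    · exact Or.inl h
    · push_neg at h
      exact Or.inr ⟨h, fo x h⟩
  constructor
  · intro x hx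
    rcases dich x with ⟨m, c, hc, rfl⟩ | ⟨hno, hf0⟩
    · obtain ⟨c', hc', hG⟩ := G m c hc
      rw [hG]
      intro h0
      rcases smul_eq_zero.mp h0 with h | h
      exacts [hc' h, hr0 _ h]
    · rw [hf0, zero_smul, sub_zero]
      exact hx
  · intro x y hx hy a ha heq
    rcases dich x with ⟨mx, cx, hcx, rfl⟩ | ⟨hnox, hfx⟩
    · obtain ⟨cx', hcx', hGx⟩ := G mx cx hcx
      rcases dich y with ⟨my, cy, hcy, rfl⟩ | ⟨hnoy, hfy⟩
      · by_cases hmm : mx = my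
        · subst hmm
          exact ⟨cx * cy⁻¹, by rw [smul_smul, mul_assoc, inv_mul_cancel₀ hcy, mul_one]⟩
        · exfalso
          obtain ⟨cy', hcy', hGy⟩ := G my cy hcy
          rw [hGx, hGy, smul_smul] at heq
          exact rayP (σ mx) (σ my) (fun hh => hmm (hσ hh)) cx' (a * cy') hcx' heq
      · exfalso
        rw [hfy, zero_smul, sub_zero, hGx] at heq
        have hyform : y = (a⁻¹ * cx') • r (σ mx) := by
          rw [← smul_smul, heq, smul_smul, inv_mul_cancel₀ ha, one_smul]
        exact hnoy (σ mx) (a⁻¹ * cx') (mul_ne_zero (inv_ne_zero ha) hcx') hyform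
    · rcases dich y with ⟨my, cy, hcy, rfl⟩ | ⟨hnoy, hfy⟩
      · exfalso
        obtain ⟨cy', hcy', hGy⟩ := G my cy hcy
        rw [hfx, zero_smul, sub_zero, hGy, smul_smul] at heq
        exact hnox (σ my) (a * cy') (mul_ne_zero ha hcy') heq
      · rw [hfx, zero_smul, sub_zero, hfy, zero_smul, sub_zero] at heq
        exact ⟨a, heq⟩



theorem case1_pack {F : Type*} [Field F] [Fintype F] {k : ℕ}
    (hF : 4 ≤ Fintype.card F) (hk : 2 ≤ k) :
    ∃ (f : (Fin k → F) → F) (β : Fin 3 → Fin k → F),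
      (∀ a : F, a ≠ 0 → ∀ x, f (a • x) = a * f x) ∧
      (∀ m m' : Fin 3, m ≠ m' → β m ≠ β m') ∧
      (∀ (x1 : Fin k → F) (x2 : F),
        (∀ u : Fin k → F, u ≠ 0 → u ⬝ᵥ x1 + f u * x2 = 0) → x1 = 0 ∧ x2 = 0) ∧
      (∀ (m : Fin 3) (x : Fin k → F), x ≠ 0 → x - f x • β m ≠ 0) ∧
      (∀ (m : Fin 3) (x y : Fin k → F), x ≠ 0 → y ≠ 0 → ∀ a : F, a ≠ 0 →
        x - f x • β m = a • (y - f y • β m) → ∃ c : F, x = c • y) := by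
  classical
  have h0k : 0 < k := by omega
  have h1k : 1 < k := by omega
  set i0 : Fin k := ⟨0, h0k⟩ with hi0def
  set i1 : Fin k := ⟨1, h1k⟩ with hi1def
  have hi01 : i1 ≠ i0 := by simp [hi0def, hi1def, Fin.ext_iff]
  set ε0 : Fin k → F := Pi.single i0 1 with hε0def
  obtain ⟨s, hsmem, s', hsmem', hss'⟩ :
      ∃ s ∈ ((Finset.univ : Finset F) \ {0, 1}),
        ∃ s' ∈ ((Finset.univ : Finset F) \ {0, 1}), s ≠ s' := by
    apply Finset.one_lt_card.mp
    have h1 := Finset.card_le_card_sdiff_add_card (s := (Finset.univ : Finset F))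
      (t := ({0, 1} : Finset F))
    have h2 : ({0, 1} : Finset F).card ≤ 2 :=
      le_trans (Finset.card_insert_le _ _) (by simp)
    have h3 : (Finset.univ : Finset F).card = Fintype.card F := rfl
    omega
  rw [Finset.mem_sdiff, Finset.mem_insert, Finset.mem_singleton] at hsmem hsmem'
  push_neg at hsmem hsmem'
  obtain ⟨-, hs0, hs1⟩ := hsmem
  obtain ⟨-, hs0', hs1'⟩ := hsmem'
  set f : (Fin k → F) → F := fun x => if ∃ c : F, c ≠ 0 ∧ x = c • ε0 then x i0 else 0
    with hfdef
  have hray : ∀ c : F, c ≠ 0 → f (c • ε0) = c := by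
    intro c hc
    rw [hfdef]
    simp only []
    rw [if_pos ⟨c, hc, rfl⟩]
    simp [hε0def, Pi.single_eq_same]
  have hno : ∀ x : Fin k → F, (¬∃ c : F, c ≠ 0 ∧ x = c • ε0) → f x = 0 := by
    intro x hx
    rw [hfdef]
    simp only []
    rw [if_neg hx]
  have hε0ne : ε0 ≠ 0 := by
    intro h
    have := congrFun h i0
    rw [hε0def] at this
    simp [Pi.single_eq_same] at this
  have hom : ∀ a : F, a ≠ 0 → ∀ x, f (a • x) = a * f x := by
    intro a ha x
    by_cases hx : ∃ c : F, c ≠ 0 ∧ x = c • ε0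
    · obtain ⟨c, hc, rfl⟩ := hx
      rw [smul_smul, hray _ (mul_ne_zero ha hc), hray _ hc]
    · have hax : ¬∃ c : F, c ≠ 0 ∧ a • x = c • ε0 := by
        rintro ⟨c, hc, hceq⟩
        refine hx ⟨a⁻¹ * c, mul_ne_zero (inv_ne_zero ha) hc, ?_⟩
        rw [← smul_smul, ← hceq, smul_smul, inv_mul_cancel₀ ha, one_smul]
      rw [hno _ hax, hno _ hx, mul_zero]
  set β : Fin 3 → Fin k → F := ![0, s • ε0, s' • ε0] with hβdef
  have hβval : ∀ (t : F), (t • ε0) i0 = t := by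
    intro t
    rw [hε0def]
    simp [Pi.single_eq_same]
  have hne01 : (0 : Fin k → F) ≠ s • ε0 := by
    intro h
    have h2 := congrFun h i0
    simp [hβval] at h2
    exact hs0 h2.symm
  have hne02 : (0 : Fin k → F) ≠ s' • ε0 := by
    intro h
    have h2 := congrFun h i0
    simp [hβval] at h2
    exact hs0' h2.symm
  have hne12 : s • ε0 ≠ s' • ε0 := by
    intro h
    have h2 := congrFun h i0
    rw [hβval, hβval] at h2
    exact hss' h2
  have hβ : ∀ m m' : Fin 3, m ≠ m' → β m ≠ β m' := by
    intro m m' hmm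
    fin_cases m <;> fin_cases m' <;>
      simp only [hβdef, Matrix.cons_val_zero, Matrix.cons_val_one, Matrix.head_cons,
        Fin.isValue] <;>
      first
        | exact absurd rfl hmm
        | exact hne01
        | exact hne02
        | exact hne12
        | exact Ne.symm hne01
        | exact Ne.symm hne02
        | exact Ne.symm hne12
        | (exact absurd rfl (by simpa using hmm))
  have hsing_ne : ∀ j : Fin k, (Pi.single j 1 : Fin k → F) ≠ 0 := by
    intro j h
    have := congrFun h j
    simp [Pi.single_eq_same] at this
  have hfj : ∀ j : Fin k, j ≠ i0 → f (Pi.single j 1) = 0 := by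
    intro j hj
    apply hno
    rintro ⟨c, hc, hceq⟩
    have := congrFun hceq j
    rw [hε0def] at this
    simp [Pi.single_eq_same, Pi.single_eq_of_ne hj] at this
  have hcore : ∀ (x1 : Fin k → F) (x2 : F),
      (∀ u : Fin k → F, u ≠ 0 → u ⬝ᵥ x1 + f u * x2 = 0) → x1 = 0 ∧ x2 = 0 := by
    intro x1 x2 h
    have step1 : ∀ j : Fin k, j ≠ i0 → x1 j = 0 := by
      intro j hj
      have := h (Pi.single j 1) (hsing_ne j)
      rwa [hfj j hj, single_dotProduct, one_mul, zero_mul, add_zero] at this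
    have hu2ne : (Pi.single i0 1 + Pi.single i1 1 : Fin k → F) ≠ 0 := by
      intro hcon
      have := congrFun hcon i0
      simp [Pi.single_eq_same, Pi.single_eq_of_ne (Ne.symm hi01)] at this
    have hfu2 : f (Pi.single i0 1 + Pi.single i1 1) = 0 := by
      apply hno
      rintro ⟨c, hc, hceq⟩
      have := congrFun hceq i1
      rw [hε0def] at this
      simp [Pi.single_eq_same, Pi.single_eq_of_ne hi01] at this
    have h2 := h _ hu2ne
    rw [hfu2, zero_mul, add_zero, add_dotProduct, single_dotProduct,
      single_dotProduct, one_mul, one_mul] at h2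
    have hx10 : x1 i0 = 0 := by
      rw [step1 i1 hi01, add_zero] at h2
      exact h2
    have hfε0 : f ε0 = 1 := by
      have := hray 1 one_ne_zero
      rwa [one_smul] at this
    have h3 := h ε0 hε0ne
    rw [hfε0, one_mul, hε0def, single_dotProduct, one_mul] at h3
    have hx2 : x2 = 0 := by
      rw [hx10, zero_add] at h3
      exact h3
    refine ⟨funext fun j => ?_, hx2⟩
    show x1 j = 0
    by_cases hj : j = i0
    · rw [hj]; exact hx10
    · exact step1 j hj
  have gform : ∀ (m : Fin 3) (z : Fin k → F), z ≠ 0 →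
      ∃ u : F, u ≠ 0 ∧ z - f z • β m = u • z := by
    intro m z hz
    by_cases hzray : ∃ c : F, c ≠ 0 ∧ z = c • ε0
    · obtain ⟨c, hc, rfl⟩ := hzray
      rw [hray c hc]
      fin_cases m
      · refine ⟨1, one_ne_zero, ?_⟩
        simp [hβdef]
      · refine ⟨1 - s, sub_ne_zero.mpr (Ne.symm hs1), ?_⟩
        show c • ε0 - c • (s • ε0) = (1 - s) • (c • ε0)
        module
      · refine ⟨1 - s', sub_ne_zero.mpr (Ne.symm hs1'), ?_⟩
        show c • ε0 - c • (s' • ε0) = (1 - s') • (c • ε0)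
        module
    · rw [hno _ hzray, zero_smul, sub_zero]
      exact ⟨1, one_ne_zero, (one_smul F z).symm⟩
  refine ⟨f, β, hom, hβ, hcore, ?_, ?_⟩
  · intro m x hx
    obtain ⟨u, hu, hg⟩ := gform m x hx
    rw [hg]
    intro h0
    rcases smul_eq_zero.mp h0 with h | h
    exacts [hu h, hx h]
  · intro m x y hx hy a ha heq
    obtain ⟨u, hu, hgx⟩ := gform m x hx
    obtain ⟨u', hu', hgy⟩ := gform m y hy
    rw [hgx, hgy, smul_smul] at heq
    refine ⟨u⁻¹ * (a * u'), ?_⟩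
    rw [← smul_smul, ← heq, smul_smul, inv_mul_cancel₀ hu, one_smul]

theorem case2_pack {F : Type*} [Field F] [Fintype F] {k : ℕ}
    (hF : Fintype.card F = 3) (hk : 3 ≤ k) :
    ∃ (f : (Fin k → F) → F) (β : Fin 3 → Fin k → F),
      (∀ a : F, a ≠ 0 → ∀ x, f (a • x) = a * f x) ∧
      (∀ m m' : Fin 3, m ≠ m' → β m ≠ β m') ∧
      (∀ (x1 : Fin k → F) (x2 : F),
        (∀ u : Fin k → F, u ≠ 0 → u ⬝ᵥ x1 + f u * x2 = 0) → x1 = 0 ∧ x2 = 0) ∧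
      (∀ (m : Fin 3) (x : Fin k → F), x ≠ 0 → x - f x • β m ≠ 0) ∧
      (∀ (m : Fin 3) (x y : Fin k → F), x ≠ 0 → y ≠ 0 → ∀ a : F, a ≠ 0 →
        x - f x • β m = a • (y - f y • β m) → ∃ c : F, x = c • y) := by
  classical
  have h0k : 0 < k := by omega
  have h1k : 1 < k := by omega
  have h2k : 2 < k := by omega
  set i0 : Fin k := ⟨0, h0k⟩ with hi0def
  set i1 : Fin k := ⟨1, h1k⟩ with hi1def
  set i2 : Fin k := ⟨2, h2k⟩ with hi2def
  have hi01 : i1 ≠ i0 := by simp [hi0def, hi1def, Fin.ext_iff]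
  have hi02 : i2 ≠ i0 := by simp [hi0def, hi2def, Fin.ext_iff]
  have hi12 : i2 ≠ i1 := by simp [hi1def, hi2def, Fin.ext_iff]
  have h3 : (3 : F) = 0 := by
    have := FiniteField.cast_card_eq_zero (K := F)
    rw [hF] at this
    exact_mod_cast this
  have h2ne : (2 : F) ≠ 0 := by
    intro h
    exact one_ne_zero (α := F) (by linear_combination h3 - h)
  have h12ne : (1 : F) ≠ 2 := by
    intro h
    exact one_ne_zero (α := F) (by linear_combination h3 + 2 * h)
  set ε0 : Fin k → F := Pi.single i0 1 with hε0def
  set ε1 : Fin k → F := Pi.single i1 1 with hε1def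
  set ε2 : Fin k → F := Pi.single i2 1 with hε2def
  set r : Fin 3 → Fin k → F := ![ε0, ε1, ε0 + ε1] with hrdef
  have hrA : r 0 = ε0 := rfl
  have hrB : r 1 = ε1 := rfl
  have hrC : r 2 = ε0 + ε1 := rfl
  -- coordinate values
  have he00 : ε0 i0 = 1 := Pi.single_eq_same i0 1
  have he01 : ε0 i1 = 0 := Pi.single_eq_of_ne hi01 1
  have he10 : ε1 i0 = 0 := Pi.single_eq_of_ne (Ne.symm hi01) 1
  have he11 : ε1 i1 = 1 := Pi.single_eq_same i1 1
  have hr00 : r 0 i0 = 1 := by rw [hrA]; exact he00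
  have hr01 : r 0 i1 = 0 := by rw [hrA]; exact he01
  have hr10 : r 1 i0 = 0 := by rw [hrB]; exact he10
  have hr11 : r 1 i1 = 1 := by rw [hrB]; exact he11
  have hr20 : r 2 i0 = 1 := by rw [hrC]; show ε0 i0 + ε1 i0 = 1; rw [he00, he10, add_zero]
  have hr21 : r 2 i1 = 1 := by rw [hrC]; show ε0 i1 + ε1 i1 = 1; rw [he01, he11, zero_add]
  have hsm : ∀ (t : F) (z : Fin k → F) (j : Fin k), (t • z) j = t * z j := fun _ _ _ => rfl
  have hr0A : r 0 ≠ (0 : Fin k → F) := by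
    intro hm
    exact one_ne_zero (α := F) (by rw [← hr00, hm]; rfl)
  have hr0B : r 1 ≠ (0 : Fin k → F) := by
    intro hm
    exact one_ne_zero (α := F) (by rw [← hr11, hm]; rfl)
  have hr0C : r 2 ≠ (0 : Fin k → F) := by
    intro hm
    exact one_ne_zero (α := F) (by rw [← hr20, hm]; rfl)
  have hr0 : ∀ m : Fin 3, r m ≠ 0 := by
    intro m
    fin_cases m
    · exact hr0A
    · exact hr0B
    · exact hr0C
  have rayP01 : ∀ d d' : F, d ≠ 0 → d • r 0 ≠ d' • r 1 := by
    intro d d' hd h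
    have hA := congrFun h i0
    rw [hsm, hsm, hr00, hr10, mul_one, mul_zero] at hA
    exact hd hA
  have rayP02 : ∀ d d' : F, d ≠ 0 → d • r 0 ≠ d' • r 2 := by
    intro d d' hd h
    have hA := congrFun h i0
    have hB := congrFun h i1
    rw [hsm, hsm, hr00, hr20, mul_one, mul_one] at hA
    rw [hsm, hsm, hr01, hr21, mul_zero, mul_one] at hB
    exact hd (hA.trans hB.symm)
  have rayP10 : ∀ d d' : F, d ≠ 0 → d • r 1 ≠ d' • r 0 := by
    intro d d' hd h
    have hB := congrFun h i1
    rw [hsm, hsm, hr11, hr01, mul_one, mul_zero] at hB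
    exact hd hB
  have rayP12 : ∀ d d' : F, d ≠ 0 → d • r 1 ≠ d' • r 2 := by
    intro d d' hd h
    have hA := congrFun h i0
    have hB := congrFun h i1
    rw [hsm, hsm, hr10, hr20, mul_zero, mul_one] at hA
    rw [hsm, hsm, hr11, hr21, mul_one, mul_one] at hB
    rw [← hA] at hB
    exact hd hB
  have rayP20 : ∀ d d' : F, d ≠ 0 → d • r 2 ≠ d' • r 0 := by
    intro d d' hd h
    have hB := congrFun h i1
    rw [hsm, hsm, hr21, hr01, mul_one, mul_zero] at hB
    exact hd hB
  have rayP21 : ∀ d d' : F, d ≠ 0 → d • r 2 ≠ d' • r 1 := by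
    intro d d' hd h
    have hA := congrFun h i0
    rw [hsm, hsm, hr20, hr10, mul_one, mul_zero] at hA
    exact hd hA
  have rayP : ∀ m m' : Fin 3, m ≠ m' → ∀ d d' : F, d ≠ 0 → d • r m ≠ d' • r m' := by
    intro m m' hmm d d' hd
    fin_cases m <;> fin_cases m' <;>
      first
        | exact absurd rfl hmm
        | exact rayP01 d d' hd
        | exact rayP02 d d' hd
        | exact rayP10 d d' hd
        | exact rayP12 d d' hd
        | exact rayP20 d d' hd
        | exact rayP21 d d' hd
  -- f and its evaluations
  set f : (Fin k → F) → F := fun x =>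
    if ∃ c : F, c ≠ 0 ∧ x = c • r 0 then x i0
    else if ∃ c : F, c ≠ 0 ∧ x = c • r 1 then x i1
    else if ∃ c : F, c ≠ 0 ∧ x = c • r 2 then 2 * x i0
    else 0 with hfdef
  have f0 : ∀ c : F, c ≠ 0 → f (c • r 0) = c := by
    intro c hc
    rw [hfdef]
    simp only []
    rw [if_pos ⟨c, hc, rfl⟩, hsm, hr00, mul_one]
  have f1 : ∀ c : F, c ≠ 0 → f (c • r 1) = c := by
    intro c hc
    rw [hfdef]
    simp only []
    rw [if_neg, if_pos ⟨c, hc, rfl⟩, hsm, hr11, mul_one]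
    rintro ⟨c', hc', hceq⟩
    exact rayP 1 0 (by decide) c c' hc hceq
  have f2 : ∀ c : F, c ≠ 0 → f (c • r 2) = 2 * c := by
    intro c hc
    rw [hfdef]
    simp only []
    rw [if_neg, if_neg, if_pos ⟨c, hc, rfl⟩, hsm, hr20, mul_one]
    · rintro ⟨c', hc', hceq⟩
      exact rayP 2 1 (by decide) c c' hc hceq
    · rintro ⟨c', hc', hceq⟩
      exact rayP 2 0 (by decide) c c' hc hceq
  have fo : ∀ x : Fin k → F, (∀ (m : Fin 3) (c : F), c ≠ 0 → x ≠ c • r m) → f x = 0 := by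
    intro x hx
    rw [hfdef]
    simp only []
    rw [if_neg, if_neg, if_neg]
    · rintro ⟨c, hc, hceq⟩; exact hx 2 c hc hceq
    · rintro ⟨c, hc, hceq⟩; exact hx 1 c hc hceq
    · rintro ⟨c, hc, hceq⟩; exact hx 0 c hc hceq
  have hcls : ∀ x : Fin k → F, (∃ (m : Fin 3) (c : F), c ≠ 0 ∧ x = c • r m) ∨
      (∀ (m : Fin 3) (c : F), c ≠ 0 → x ≠ c • r m) := by
    intro x
    by_cases h : ∃ (m : Fin 3) (c : F), c ≠ 0 ∧ x = c • r m
    · exact Or.inl h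
    · push_neg at h
      exact Or.inr h
  have hom : ∀ a : F, a ≠ 0 → ∀ x, f (a • x) = a * f x := by
    intro a ha x
    have homA : ∀ c : F, c ≠ 0 → f (a • (c • r 0)) = a * f (c • r 0) := by
      intro c hc
      rw [smul_smul, f0 _ (mul_ne_zero ha hc), f0 _ hc]
    have homB : ∀ c : F, c ≠ 0 → f (a • (c • r 1)) = a * f (c • r 1) := by
      intro c hc
      rw [smul_smul, f1 _ (mul_ne_zero ha hc), f1 _ hc]
    have homC : ∀ c : F, c ≠ 0 → f (a • (c • r 2)) = a * f (c • r 2) := by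
      intro c hc
      rw [smul_smul, f2 _ (mul_ne_zero ha hc), f2 _ hc]; ring
    rcases hcls x with ⟨m, c, hc, rfl⟩ | hnone
    · fin_cases m
      · exact homA c hc
      · exact homB c hc
      · exact homC c hc
    · have hax : ∀ (m : Fin 3) (c : F), c ≠ 0 → a • x ≠ c • r m := by
        intro m c hc hceq
        apply hnone m (a⁻¹ * c) (mul_ne_zero (inv_ne_zero ha) hc)
        rw [← smul_smul, ← hceq, smul_smul, inv_mul_cancel₀ ha, one_smul]
      rw [fo _ hax, fo _ hnone, mul_zero]
  set β : Fin 3 → Fin k → F := ![0, ε0 + (2 : F) • ε1, (2 : F) • ε0 + ε1] with hβdef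
  have hβA : β 0 = 0 := rfl
  have hβB : β 1 = ε0 + (2 : F) • ε1 := rfl
  have hβC : β 2 = (2 : F) • ε0 + ε1 := rfl
  have hβB0 : β 1 i0 = 1 := by
    rw [hβB, Pi.add_apply, he00, hsm, he10, mul_zero, add_zero]
  have hβB1 : β 1 i1 = 2 := by
    rw [hβB, Pi.add_apply, he01, hsm, he11, mul_one, zero_add]
  have hβC0 : β 2 i0 = 2 := by
    rw [hβC, Pi.add_apply, he10, hsm, he00, mul_one, add_zero]
  have hβ01 : β 0 ≠ β 1 := by
    intro h
    have hA := congrFun h i0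
    rw [hβA, hβB0, Pi.zero_apply] at hA
    exact one_ne_zero (α := F) hA.symm
  have hβ02 : β 0 ≠ β 2 := by
    intro h
    have hA := congrFun h i0
    rw [hβA, hβC0, Pi.zero_apply] at hA
    exact h2ne hA.symm
  have hβ12 : β 1 ≠ β 2 := by
    intro h
    have hA := congrFun h i0
    rw [hβB0, hβC0] at hA
    exact h12ne hA
  have hβ : ∀ m m' : Fin 3, m ≠ m' → β m ≠ β m' := by
    intro m m' hmm
    fin_cases m <;> fin_cases m' <;>
      first
        | exact absurd rfl hmm
        | exact hβ01
        | exact hβ02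
        | exact hβ12
        | exact Ne.symm hβ01
        | exact Ne.symm hβ02
        | exact Ne.symm hβ12
  -- core nondegeneracy
  have hrjA : ∀ j : Fin k, j ≠ i0 → j ≠ i1 → r 0 j = 0 := by
    intro j hj0 hj1
    exact Pi.single_eq_of_ne hj0 1
  have hrjB : ∀ j : Fin k, j ≠ i0 → j ≠ i1 → r 1 j = 0 := by
    intro j hj0 hj1
    exact Pi.single_eq_of_ne hj1 1
  have hrjC : ∀ j : Fin k, j ≠ i0 → j ≠ i1 → r 2 j = 0 := by
    intro j hj0 hj1
    show ε0 j + ε1 j = 0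
    rw [hε0def, hε1def, Pi.single_eq_of_ne hj0 1, Pi.single_eq_of_ne hj1 1, add_zero]
  have hrj : ∀ (m : Fin 3) (j : Fin k), j ≠ i0 → j ≠ i1 → r m j = 0 := by
    intro m j hj0 hj1
    fin_cases m
    · exact hrjA j hj0 hj1
    · exact hrjB j hj0 hj1
    · exact hrjC j hj0 hj1
  have hsing_ne : ∀ j : Fin k, (Pi.single j 1 : Fin k → F) ≠ 0 := by
    intro j h
    have := congrFun h j
    simp [Pi.single_eq_same] at this
  have hfj : ∀ j : Fin k, j ≠ i0 → j ≠ i1 → f (Pi.single j 1) = 0 := by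
    intro j hj0 hj1
    apply fo
    intro m c hc hceq
    have := congrFun hceq j
    rw [Pi.single_eq_same, hsm, hrj m j hj0 hj1, mul_zero] at this
    exact one_ne_zero this
  have hcore : ∀ (x1 : Fin k → F) (x2 : F),
      (∀ u : Fin k → F, u ≠ 0 → u ⬝ᵥ x1 + f u * x2 = 0) → x1 = 0 ∧ x2 = 0 := by
    intro x1 x2 h
    have step1 : ∀ j : Fin k, j ≠ i0 → j ≠ i1 → x1 j = 0 := by
      intro j hj0 hj1
      have := h (Pi.single j 1) (hsing_ne j)
      rwa [hfj j hj0 hj1, single_dotProduct, one_mul, zero_mul, add_zero] at this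
    -- u = ε0 + ε2
    have hne02' : (ε0 + ε2 : Fin k → F) ≠ 0 := by
      intro hcon
      have := congrFun hcon i0
      rw [Pi.add_apply, he00, hε2def, Pi.single_eq_of_ne (Ne.symm hi02) 1, add_zero] at this
      exact one_ne_zero this
    have hf02 : f (ε0 + ε2) = 0 := by
      apply fo
      intro m c hc hceq
      have := congrFun hceq i2
      rw [Pi.add_apply, hε2def, Pi.single_eq_same, hε0def, Pi.single_eq_of_ne hi02 1,
        zero_add, hsm, hrj m i2 hi02 hi12, mul_zero] at this
      exact one_ne_zero this
    have h02 := h _ hne02'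
    rw [hf02, zero_mul, add_zero, add_dotProduct, hε0def, hε2def,
      single_dotProduct, single_dotProduct, one_mul, one_mul] at h02
    have hx10 : x1 i0 = 0 := by
      rw [step1 i2 hi02 hi12, add_zero] at h02
      exact h02
    -- u = ε1 + ε2
    have hne12' : (ε1 + ε2 : Fin k → F) ≠ 0 := by
      intro hcon
      have := congrFun hcon i1
      rw [Pi.add_apply, he11, hε2def, Pi.single_eq_of_ne (Ne.symm hi12) 1, add_zero] at this
      exact one_ne_zero this
    have hf12 : f (ε1 + ε2) = 0 := by
      apply fo
      intro m c hc hceq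
      have := congrFun hceq i2
      rw [Pi.add_apply, hε2def, Pi.single_eq_same, hε1def, Pi.single_eq_of_ne hi12 1,
        zero_add, hsm, hrj m i2 hi02 hi12, mul_zero] at this
      exact one_ne_zero this
    have h12 := h _ hne12'
    rw [hf12, zero_mul, add_zero, add_dotProduct, hε1def, hε2def,
      single_dotProduct, single_dotProduct, one_mul, one_mul] at h12
    have hx11 : x1 i1 = 0 := by
      rw [step1 i2 hi02 hi12, add_zero] at h12
      exact h12
    -- u = ε0
    have hfε0 : f ε0 = 1 := by
      have := f0 1 one_ne_zero
      rwa [one_smul, hrA] at this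
    have hε0ne : ε0 ≠ 0 := by rw [hε0def]; exact hsing_ne i0
    have h00 := h ε0 hε0ne
    rw [hfε0, one_mul, hε0def, single_dotProduct, one_mul] at h00
    have hx2 : x2 = 0 := by
      rw [show x1 i0 = 0 from hx10, zero_add] at h00
      exact h00
    refine ⟨funext fun j => ?_, hx2⟩
    show x1 j = 0
    by_cases hj0 : j = i0
    · rw [hj0]; exact hx10
    · by_cases hj1 : j = i1
      · rw [hj1]; exact hx11
      · exact step1 j hj0 hj1
  -- the G data for β 1 and β 2
  have GbA : ∀ c : F, c ≠ 0 → ∃ c' : F, c' ≠ 0 ∧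
      c • r 0 - f (c • r 0) • β 1 = c' • r 1 := by
    intro c hc
    refine ⟨-(2 * c), neg_ne_zero.mpr (mul_ne_zero h2ne hc), ?_⟩
    rw [f0 c hc]
    show c • ε0 - c • (ε0 + (2 : F) • ε1) = -(2 * c) • ε1
    module
  have GbB : ∀ c : F, c ≠ 0 → ∃ c' : F, c' ≠ 0 ∧
      c • r 1 - f (c • r 1) • β 1 = c' • r 2 := by
    intro c hc
    refine ⟨-c, neg_ne_zero.mpr hc, ?_⟩
    rw [f1 c hc]
    show c • ε1 - c • (ε0 + (2 : F) • ε1) = -c • (ε0 + ε1)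
    module
  have GbC : ∀ c : F, c ≠ 0 → ∃ c' : F, c' ≠ 0 ∧
      c • r 2 - f (c • r 2) • β 1 = c' • r 0 := by
    intro c hc
    refine ⟨-c, neg_ne_zero.mpr hc, ?_⟩
    rw [f2 c hc]
    show c • (ε0 + ε1) - (2 * c) • (ε0 + (2 : F) • ε1) = -c • ε0
    have hh : c • (ε0 + ε1) - (2 * c) • (ε0 + (2 : F) • ε1) - (-c) • ε0
        = (-(3 * c)) • ε1 := by module
    have hz : (-(3 * c) : F) = 0 := by linear_combination (-c) * h3
    rw [hz, zero_smul] at hh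
    exact sub_eq_zero.mp hh
  have Gb : ∀ (m : Fin 3) (c : F), c ≠ 0 → ∃ c' : F, c' ≠ 0 ∧
      c • r m - f (c • r m) • β 1 = c' • r ((![1, 2, 0] : Fin 3 → Fin 3) m) := by
    intro m c hc
    fin_cases m
    · exact GbA c hc
    · exact GbB c hc
    · exact GbC c hc
  have GcA : ∀ c : F, c ≠ 0 → ∃ c' : F, c' ≠ 0 ∧
      c • r 0 - f (c • r 0) • β 2 = c' • r 2 := by
    intro c hc
    refine ⟨-c, neg_ne_zero.mpr hc, ?_⟩
    rw [f0 c hc]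
    show c • ε0 - c • ((2 : F) • ε0 + ε1) = -c • (ε0 + ε1)
    module
  have GcB : ∀ c : F, c ≠ 0 → ∃ c' : F, c' ≠ 0 ∧
      c • r 1 - f (c • r 1) • β 2 = c' • r 0 := by
    intro c hc
    refine ⟨-(2 * c), neg_ne_zero.mpr (mul_ne_zero h2ne hc), ?_⟩
    rw [f1 c hc]
    show c • ε1 - c • ((2 : F) • ε0 + ε1) = -(2 * c) • ε0
    module
  have GcC : ∀ c : F, c ≠ 0 → ∃ c' : F, c' ≠ 0 ∧
      c • r 2 - f (c • r 2) • β 2 = c' • r 1 := by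
    intro c hc
    refine ⟨-c, neg_ne_zero.mpr hc, ?_⟩
    rw [f2 c hc]
    show c • (ε0 + ε1) - (2 * c) • ((2 : F) • ε0 + ε1) = -c • ε1
    have hh : c • (ε0 + ε1) - (2 * c) • ((2 : F) • ε0 + ε1) - (-c) • ε1
        = (-(3 * c)) • ε0 := by module
    have hz : (-(3 * c) : F) = 0 := by linear_combination (-c) * h3
    rw [hz, zero_smul] at hh
    exact sub_eq_zero.mp hh
  have Gb' : ∀ (m : Fin 3) (c : F), c ≠ 0 → ∃ c' : F, c' ≠ 0 ∧
      c • r m - f (c • r m) • β 2 = c' • r ((![2, 0, 1] : Fin 3 → Fin 3) m) := by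
    intro m c hc
    fin_cases m
    · exact GcA c hc
    · exact GcB c hc
    · exact GcC c hc
  obtain ⟨SB1, SB2⟩ := star_generic r f (β 1) hr0 rayP fo ![1, 2, 0] (by decide) Gb
  obtain ⟨SC1, SC2⟩ := star_generic r f (β 2) hr0 rayP fo ![2, 0, 1] (by decide) Gb'
  have hnz0 : ∀ x : Fin k → F, x ≠ 0 → x - f x • β 0 ≠ 0 := by
    intro x hx
    rw [hβA, smul_zero, sub_zero]
    exact hx
  have hst0 : ∀ x y : Fin k → F, x ≠ 0 → y ≠ 0 → ∀ a : F, a ≠ 0 →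
      x - f x • β 0 = a • (y - f y • β 0) → ∃ c : F, x = c • y := by
    intro x y hx hy a ha heq
    rw [hβA, smul_zero, sub_zero, smul_zero, sub_zero] at heq
    exact ⟨a, heq⟩
  refine ⟨f, β, hom, hβ, hcore, ?_, ?_⟩
  · intro m x hx
    fin_cases m
    · exact hnz0 x hx
    · exact SB1 x hx
    · exact SC1 x hx
  · intro m x y hx hy a ha heq
    fin_cases m
    · exact hst0 x y hx hy a ha heq
    · exact SB2 x y hx hy a ha heq
    · exact SC2 x y hx hy a ha heq

theorem case3_pack {F : Type*} [Field F] [Fintype F] {k : ℕ}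
    (hF : Fintype.card F = 2) (hk : 4 ≤ k) :
    ∃ (f : (Fin k → F) → F) (β : Fin 3 → Fin k → F),
      (∀ a : F, a ≠ 0 → ∀ x, f (a • x) = a * f x) ∧
      (∀ m m' : Fin 3, m ≠ m' → β m ≠ β m') ∧
      (∀ (x1 : Fin k → F) (x2 : F),
        (∀ u : Fin k → F, u ≠ 0 → u ⬝ᵥ x1 + f u * x2 = 0) → x1 = 0 ∧ x2 = 0) ∧
      (∀ (m : Fin 3) (x : Fin k → F), x ≠ 0 → x - f x • β m ≠ 0) ∧
      (∀ (m : Fin 3) (x y : Fin k → F), x ≠ 0 → y ≠ 0 → ∀ a : F, a ≠ 0 →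
        x - f x • β m = a • (y - f y • β m) → ∃ c : F, x = c • y) := by
  classical
  have h0k : 0 < k := by omega
  have h1k : 1 < k := by omega
  have h2k : 2 < k := by omega
  have h3k : 3 < k := by omega
  set i0 : Fin k := ⟨0, h0k⟩ with hi0def
  set i1 : Fin k := ⟨1, h1k⟩ with hi1def
  set i2 : Fin k := ⟨2, h2k⟩ with hi2def
  set i3 : Fin k := ⟨3, h3k⟩ with hi3def
  have hi01 : i1 ≠ i0 := by simp [hi0def, hi1def, Fin.ext_iff]
  have hi02 : i2 ≠ i0 := by simp [hi0def, hi2def, Fin.ext_iff]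
  have hi12 : i2 ≠ i1 := by simp [hi1def, hi2def, Fin.ext_iff]
  have hi23 : i3 ≠ i2 := by simp [hi2def, hi3def, Fin.ext_iff]
  have hone : ∀ a : F, a ≠ 0 → a = 1 := by
    intro a ha
    have := FiniteField.pow_card_sub_one_eq_one a ha
    rw [hF] at this
    simpa using this
  -- T is the affine plane {x | x i2 = 1, x j = 0 for j.val ≥ 3}
  set P : (Fin k → F) → Prop := fun x => x i2 = 1 ∧ ∀ j : Fin k, 3 ≤ (j : ℕ) → x j = 0
    with hPdef
  set f : (Fin k → F) → F := fun x => if P x then 1 else 0 with hfdef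
  have fpos : ∀ x, P x → f x = 1 := by
    intro x hx
    rw [hfdef]
    simp only []
    rw [if_pos hx]
  have fneg : ∀ x, ¬P x → f x = 0 := by
    intro x hx
    rw [hfdef]
    simp only []
    rw [if_neg hx]
  have hom : ∀ a : F, a ≠ 0 → ∀ x, f (a • x) = a * f x := by
    intro a ha x
    rw [hone a ha, one_smul, one_mul]
  set ε0 : Fin k → F := Pi.single i0 1 with hε0def
  set ε1 : Fin k → F := Pi.single i1 1 with hε1def
  set ε2 : Fin k → F := Pi.single i2 1 with hε2def
  set ε3 : Fin k → F := Pi.single i3 1 with hε3def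
  set β : Fin 3 → Fin k → F := ![0, ε0, ε1] with hβdef
  have hβA : β 0 = 0 := rfl
  have hβB : β 1 = ε0 := rfl
  have hβC : β 2 = ε1 := rfl
  have hsing_ne : ∀ j : Fin k, (Pi.single j 1 : Fin k → F) ≠ 0 := by
    intro j h
    have := congrFun h j
    simp [Pi.single_eq_same] at this
  have hβ01 : β 0 ≠ β 1 := by
    intro h
    exact hsing_ne i0 (h.symm.trans hβA)
  have hβ02 : β 0 ≠ β 2 := by
    intro h
    exact hsing_ne i1 (h.symm.trans hβA)
  have hβ12 : β 1 ≠ β 2 := by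
    intro h
    rw [hβB, hβC] at h
    have := congrFun h i0
    rw [hε0def, hε1def, Pi.single_eq_same, Pi.single_eq_of_ne (Ne.symm hi01) 1] at this
    exact one_ne_zero this
  have hβ : ∀ m m' : Fin 3, m ≠ m' → β m ≠ β m' := by
    intro m m' hmm
    fin_cases m <;> fin_cases m' <;>
      first
        | exact absurd rfl hmm
        | exact hβ01
        | exact hβ02
        | exact hβ12
        | exact Ne.symm hβ01
        | exact Ne.symm hβ02
        | exact Ne.symm hβ12
  -- core
  have hPsingle : ∀ j : Fin k, j ≠ i2 → ¬P (Pi.single j 1) := by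
    intro j hj hP
    obtain ⟨hP1, hP2⟩ := hP
    by_cases hj3 : 3 ≤ (j : ℕ)
    · have := hP2 j hj3
      rw [Pi.single_eq_same] at this
      exact one_ne_zero this
    · rw [Pi.single_eq_of_ne (Ne.symm hj) 1] at hP1
      exact one_ne_zero hP1.symm
  have hcore : ∀ (x1 : Fin k → F) (x2 : F),
      (∀ u : Fin k → F, u ≠ 0 → u ⬝ᵥ x1 + f u * x2 = 0) → x1 = 0 ∧ x2 = 0 := by
    intro x1 x2 h
    have step1 : ∀ j : Fin k, j ≠ i2 → x1 j = 0 := by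
      intro j hj
      have := h (Pi.single j 1) (hsing_ne j)
      rwa [fneg _ (hPsingle j hj), single_dotProduct, one_mul, zero_mul,
        add_zero] at this
    have hu23ne : (ε2 + ε3 : Fin k → F) ≠ 0 := by
      intro hcon
      have := congrFun hcon i2
      rw [Pi.add_apply, hε2def, hε3def, Pi.single_eq_same,
        Pi.single_eq_of_ne (Ne.symm hi23) 1, add_zero] at this
      exact one_ne_zero this
    have hP23 : ¬P (ε2 + ε3) := by
      rintro ⟨-, hP2⟩
      have := hP2 i3 (by simp [hi3def])
      rw [Pi.add_apply, hε2def, hε3def, Pi.single_eq_same,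
        Pi.single_eq_of_ne hi23 1, zero_add] at this
      exact one_ne_zero this
    have h23 := h _ hu23ne
    rw [fneg _ hP23, zero_mul, add_zero, hε2def, hε3def, add_dotProduct,
      single_dotProduct, single_dotProduct, one_mul, one_mul] at h23
    have hx12 : x1 i2 = 0 := by
      rw [step1 i3 hi23, add_zero] at h23
      exact h23
    have hPε2 : P ε2 := by
      constructor
      · rw [hε2def]; exact Pi.single_eq_same i2 1
      · intro j hj
        rw [hε2def]
        apply Pi.single_eq_of_ne
        intro hje
        rw [hje, hi2def] at hj
        norm_num at hj
    have h22 := h ε2 (by rw [hε2def]; exact hsing_ne i2)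
    rw [fpos _ hPε2, one_mul, hε2def, single_dotProduct, one_mul] at h22
    have hx2 : x2 = 0 := by
      rw [show x1 i2 = 0 from hx12, zero_add] at h22
      exact h22
    refine ⟨funext fun j => ?_, hx2⟩
    show x1 j = 0
    by_cases hj : j = i2
    · rw [hj]; exact hx12
    · exact step1 j hj
  -- key translation lemma for b ∈ {ε0, ε1}
  have key : ∀ b : Fin k → F, b i2 = 0 → (∀ j : Fin k, 3 ≤ (j : ℕ) → b j = 0) →
      (∀ x : Fin k → F, x ≠ 0 → x - f x • b ≠ 0) ∧
      (∀ x y : Fin k → F, x ≠ 0 → y ≠ 0 → ∀ a : F, a ≠ 0 →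
        x - f x • b = a • (y - f y • b) → ∃ c : F, x = c • y) := by
    intro b hb2 hb3
    have hPsub : ∀ x : Fin k → F, P x → P (x - b) := by
      intro x ⟨h1, h2⟩
      constructor
      · rw [Pi.sub_apply, h1, hb2, sub_zero]
      · intro j hj
        rw [Pi.sub_apply, h2 j hj, hb3 j hj, sub_zero]
    have hPb : ¬P b := fun hP => one_ne_zero (α := F) (hb2 ▸ hP.1).symm
    constructor
    · intro x hx h0
      by_cases hP : P x
      · rw [fpos _ hP, one_smul, sub_eq_zero] at h0
        rw [h0] at hP
        exact hPb hP
      · rw [fneg _ hP, zero_smul, sub_zero] at h0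
        exact hx h0
    · intro x y hx hy a ha heq
      rw [hone a ha, one_smul] at heq
      refine ⟨1, ?_⟩
      rw [one_smul]
      by_cases hPx : P x <;> by_cases hPy : P y
      · rw [fpos _ hPx, fpos _ hPy, one_smul] at heq
        exact sub_left_inj.mp heq
      · exfalso
        rw [fpos _ hPx, one_smul, fneg _ hPy, zero_smul, sub_zero] at heq
        rw [← heq] at hPy
        exact hPy (hPsub x hPx)
      · exfalso
        rw [fneg _ hPx, zero_smul, sub_zero, fpos _ hPy, one_smul] at heq
        rw [heq] at hPx
        exact hPx (hPsub y hPy)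
      · rw [fneg _ hPx, zero_smul, sub_zero, fneg _ hPy, zero_smul, sub_zero] at heq
        exact heq
  have hbε0 : ε0 i2 = 0 := by
    rw [hε0def]; exact Pi.single_eq_of_ne hi02 1
  have hbε03 : ∀ j : Fin k, 3 ≤ (j : ℕ) → ε0 j = 0 := by
    intro j hj
    rw [hε0def]
    apply Pi.single_eq_of_ne
    intro hje
    rw [hje, hi0def] at hj
    norm_num at hj
  have hbε1 : ε1 i2 = 0 := by
    rw [hε1def]; exact Pi.single_eq_of_ne hi12 1
  have hbε13 : ∀ j : Fin k, 3 ≤ (j : ℕ) → ε1 j = 0 := by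
    intro j hj
    rw [hε1def]
    apply Pi.single_eq_of_ne
    intro hje
    rw [hje, hi1def] at hj
    norm_num at hj
  obtain ⟨KB1, KB2⟩ := key ε0 hbε0 hbε03
  obtain ⟨KC1, KC2⟩ := key ε1 hbε1 hbε13
  have hnz0 : ∀ x : Fin k → F, x ≠ 0 → x - f x • β 0 ≠ 0 := by
    intro x hx
    rw [hβA, smul_zero, sub_zero]
    exact hx
  have hst0 : ∀ x y : Fin k → F, x ≠ 0 → y ≠ 0 → ∀ a : F, a ≠ 0 →
      x - f x • β 0 = a • (y - f y • β 0) → ∃ c : F, x = c • y := by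
    intro x y hx hy a ha heq
    rw [hβA, smul_zero, sub_zero, smul_zero, sub_zero] at heq
    exact ⟨a, heq⟩
  refine ⟨f, β, hom, hβ, hcore, ?_, ?_⟩
  · intro m x hx
    fin_cases m
    · exact hnz0 x hx
    · exact KB1 x hx
    · exact KC1 x hx
  · intro m x y hx hy a ha heq
    fin_cases m
    · exact hst0 x y hx hy a ha heq
    · exact KB2 x y hx hy a ha heq
    · exact KC2 x y hx hy a ha heq


theorem glue_simplex {F : Type*} [Field F] {n k : ℕ}
    (v : Fin n → (Fin k → F)) (hv0 : ∀ i, v i ≠ 0)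
    (hv2 : ∀ i j : Fin n, i ≠ j → ∀ a : F, v j ≠ a • v i)
    (hvc : ∀ x : Fin k → F, x ≠ 0 → ∃ (i : Fin n) (a : F), x = a • v i)
    (f : (Fin k → F) → F) (hom : ∀ a : F, a ≠ 0 → ∀ x, f (a • x) = a * f x)
    (β : Fin 3 → Fin k → F) (hβ : ∀ m m' : Fin 3, m ≠ m' → β m ≠ β m')
    (hcore : ∀ (x1 : Fin k → F) (x2 : F),
      (∀ u : Fin k → F, u ≠ 0 → u ⬝ᵥ x1 + f u * x2 = 0) → x1 = 0 ∧ x2 = 0)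
    (hnz : ∀ (m : Fin 3) (x : Fin k → F), x ≠ 0 → x - f x • β m ≠ 0)
    (hstar : ∀ (m : Fin 3) (x y : Fin k → F), x ≠ 0 → y ≠ 0 → ∀ a : F, a ≠ 0 →
      x - f x • β m = a • (y - f y • β m) → ∃ c : F, x = c • y) :
    ∃ X₁ X₂ X₃ : Submodule F (Fin n → F),
      IsSimplexCode k X₁ ∧ IsSimplexCode k X₂ ∧ IsSimplexCode k X₃ ∧
      X₁ ≠ X₂ ∧ X₁ ≠ X₃ ∧ X₂ ≠ X₃ ∧
      Module.finrank F ↥(X₁ ⊓ X₂) = k - 1 ∧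
      Module.finrank F ↥(X₁ ⊓ X₃) = k - 1 ∧
      Module.finrank F ↥(X₂ ⊓ X₃) = k - 1 ∧
      ∃ Y : Submodule F (Fin n → F), Module.finrank F ↥Y = k + 1 ∧
        X₁ ≤ Y ∧ X₂ ≤ Y ∧ X₃ ≤ Y := by
  refine main_abstract (fun i => (v i, f (v i))) (fun m => (β m, 1)) ?_ ?_ ?_ ?_
  · rintro ⟨x1, x2⟩ hx
    have hx' : ∀ i, v i ⬝ᵥ x1 + f (v i) * x2 = 0 := by
      intro i
      have h : x1 ⬝ᵥ v i + x2 * f (v i) = 0 := hx i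
      have hc : v i ⬝ᵥ x1 = x1 ⬝ᵥ v i := dotProduct_comm _ _
      linear_combination h + hc
    have hcp : ∀ u : Fin k → F, u ≠ 0 → u ⬝ᵥ x1 + f u * x2 = 0 := by
      intro u hu
      obtain ⟨i, a, ha⟩ := hvc u hu
      have ha0 : a ≠ 0 := by
        intro h0
        rw [h0, zero_smul] at ha
        exact hu ha
      rw [ha, smul_dotProduct, hom a ha0, smul_eq_mul]
      linear_combination a * hx' i
    obtain ⟨h1, h2⟩ := hcore x1 x2 hcp
    rw [h1, h2]
    rfl
  · intro m m' hmm c hcon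
    have h1 := congrArg Prod.fst hcon
    have h2 := congrArg Prod.snd hcon
    simp only [Prod.smul_fst, Prod.smul_snd, smul_eq_mul, mul_one] at h1 h2
    rw [← h2, one_smul] at h1
    exact hβ m' m (Ne.symm hmm) h1
  · intro m i c hcon
    have h1 := congrArg Prod.fst hcon
    have h2 := congrArg Prod.snd hcon
    simp only [Prod.smul_fst, Prod.smul_snd, smul_eq_mul, mul_one] at h1 h2
    apply hnz m (v i) (hv0 i)
    rw [h2, h1, sub_self]
  · intro m i j hij a c hcon
    have h1 := congrArg Prod.fst hcon
    have h2 := congrArg Prod.snd hcon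
    simp only [Prod.fst_sub, Prod.snd_sub, Prod.smul_fst, Prod.smul_snd, smul_eq_mul,
      mul_one] at h1 h2
    have key : v j - f (v j) • β m = a • (v i - f (v i) • β m) := by
      have expand : (v j - f (v j) • β m) - a • (v i - f (v i) • β m)
          = (v j - a • v i) - (f (v j) - a * f (v i)) • β m := by
        module
      have hz : (v j - f (v j) • β m) - a • (v i - f (v i) • β m) = 0 := by
        rw [expand, h1, h2, sub_self]
      exact sub_eq_zero.mp hz
    by_cases ha : a = 0
    · rw [ha, zero_smul] at key
      exact hnz m (v j) (hv0 j) key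
    · obtain ⟨c', hc'⟩ := hstar m (v j) (v i) (hv0 j) (hv0 i) a ha key
      exact hv2 i j hij c' hc'


theorem exists_top_of_simplex_codes {F : Type*} [Field F] [Fintype F]
    {q n k : ℕ} (hq : Fintype.card F = q)
    (hcase : (5 ≤ q ∧ k = 2) ∨ (q = 2 ∧ 4 ≤ k) ∨ (3 ≤ q ∧ 3 ≤ k))
    (hn : n * (q - 1) = q ^ k - 1) :
    ∃ X₁ X₂ X₃ : Submodule F (Fin n → F),
      IsSimplexCode k X₁ ∧ IsSimplexCode k X₂ ∧ IsSimplexCode k X₃ ∧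
      X₁ ≠ X₂ ∧ X₁ ≠ X₃ ∧ X₂ ≠ X₃ ∧
      Module.finrank F ↥(X₁ ⊓ X₂) = k - 1 ∧
      Module.finrank F ↥(X₁ ⊓ X₃) = k - 1 ∧
      Module.finrank F ↥(X₂ ⊓ X₃) = k - 1 ∧
      ∃ Y : Submodule F (Fin n → F), Module.finrank F ↥Y = k + 1 ∧
        X₁ ≤ Y ∧ X₂ ≤ Y ∧ X₃ ≤ Y := by
  obtain ⟨v, hv0, hv2, hvc⟩ := exists_enum F hq hn
  rcases hcase with ⟨hq5, hk2⟩ | ⟨hq2, hk4⟩ | ⟨hq3, hk3⟩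
  · obtain ⟨f, β, hom, hβ, hcore, hnz, hstar⟩ :=
      case1_pack (F := F) (k := k) (by rw [hq]; omega) (by omega)
    exact glue_simplex v hv0 hv2 hvc f hom β hβ hcore hnz hstar
  · obtain ⟨f, β, hom, hβ, hcore, hnz, hstar⟩ :=
      case3_pack (F := F) (k := k) (hq.trans hq2) hk4
    exact glue_simplex v hv0 hv2 hvc f hom β hβ hcore hnz hstar
  · by_cases h4 : 4 ≤ q
    · obtain ⟨f, β, hom, hβ, hcore, hnz, hstar⟩ :=
        case1_pack (F := F) (k := k) (by rw [hq]; omega) (by omega)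
      exact glue_simplex v hv0 hv2 hvc f hom β hβ hcore hnz hstar
    · have hq3' : q = 3 := by omega
      obtain ⟨f, β, hom, hβ, hcore, hnz, hstar⟩ :=
        case2_pack (F := F) (k := k) (hq.trans hq3') hk3
      exact glue_simplex v hv0 hv2 hvc f hom β hβ hcore hnz hstar

end Main
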